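/- For a finite sequence I of positive integers, define χ'(S_I) := Σ_{I' ∈ C(I^{-1})} S_{I'} in 𝓕₂*, where I^{-1} is the reversal of I, and χ'(S_{()}) := S_{()}. Then for every nonempty sequence I = (i_1,…,i_n) of positive integers, Σ_{k=0}^{n} S_{(i_1,…,i_k)} · χ'(S_{(i_{k+1},…,i_n)}) = 0 in 𝓕₂*. (That is, χ' is the conjugation/antipode of the mod 2 dual Leibniz–Hopf algebra.) -/

import Mathlib

/-- The overlapping shuffle product of two finite sequences, as a multiset
(counting multiplicities). -/
def osp : List ℕ → List ℕ → Multiset (List ℕ)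
  | A, [] => {A}
  | [], B => {B}
  | a :: A, b :: B =>
      ((osp A (b :: B)).map (a :: ·)) +
      ((osp (a :: A) B).map (b :: ·)) +
      ((osp A B).map ((a + b) :: ·))
termination_by A B => A.length + B.length
decreasing_by all_goals (simp only [List.length_cons]; omega)

/-- The underlying free module over `ZMod 2` on the set of finite sequences
(this carries the mod 2 dual Leibniz--Hopf algebra `𝓕₂*`). -/
abbrev F2D : Type := (List ℕ) →₀ ZMod 2

/-- The basis element `S_I`. -/
noncomputable def sElem (I : List ℕ) : F2D := Finsupp.single I 1

/-- The element of `𝓕₂*` associated to a multiset of sequences, keeping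
multiplicities mod 2. -/
noncomputable def ofMS (m : Multiset (List ℕ)) : F2D := (m.map sElem).sum

/-- The bilinear product of `𝓕₂*`: on basis elements,
`S_I · S_J = Σ_K (multiplicity of K in osp I J mod 2) • S_K`. -/
noncomputable def fmul (x y : F2D) : F2D :=
  x.sum fun I a => y.sum fun J b => (a * b) • ofMS (osp I J)

/-- The coarsening set `C(I)`: all sequences obtained from `I` by summing
consecutive blocks of entries.  (`C([]) = {[]}` by convention.) -/
def coars : List ℕ → Finset (List ℕ)
  | [] => {[]}
  | [i] => {[i]}
  | i :: j :: rest =>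
      ((coars (j :: rest)).image (i :: ·)) ∪
      ((coars (j :: rest)).image (fun I' => (i + I'.headD 0) :: I'.tail))

/-- `χ'(S_I) = Σ_{I' ∈ C(I⁻¹)} S_{I'}` in `𝓕₂*`, where `I⁻¹` is the reversal
of `I` (with `χ'(S_{()}) = S_{()}`). -/
noncomputable def chiS (I : List ℕ) : F2D := ∑ I' ∈ coars I.reverse, sElem I'

/-! ### Auxiliary lemmas about `osp` -/

theorem osp_nil_right (A : List ℕ) : osp A [] = {A} := by simp [osp]

theorem osp_nil_left (B : List ℕ) : osp [] B = {B} := by cases B <;> simp [osp]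

theorem osp_cons (a b : ℕ) (A B : List ℕ) : osp (a::A) (b::B) =
      ((osp A (b :: B)).map (a :: ·)) +
      ((osp (a :: A) B).map (b :: ·)) +
      ((osp A B).map ((a + b) :: ·)) := by rw [osp]

theorem osp_snoc (A : List ℕ) : ∀ (B : List ℕ) (a b : ℕ),
    osp (A ++ [a]) (B ++ [b]) =
      ((osp (A ++ [a]) B).map (· ++ [b])) +
      ((osp A (B ++ [b])).map (· ++ [a])) +
      ((osp A B).map (· ++ [a + b])) := by
  induction A with
  | nil =>
    intro B
    induction B with
    | nil =>
      intro a b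
      simp only [List.nil_append, osp_nil_left, osp_nil_right]
      rw [osp_cons]
      simp [osp_nil_left, osp_nil_right]
    | cons b' B' ihB =>
      intro a b
      simp only [List.nil_append] at *
      rw [List.cons_append, osp_cons, osp_cons, ihB]
      simp only [osp_nil_left, Multiset.map_add, Multiset.map_map, Function.comp,
        Multiset.map_singleton, List.cons_append, List.nil_append]
      abel
  | cons a' A' ihA =>
    intro B
    induction B with
    | nil =>
      intro a b
      have h1 := ihA [] a b
      simp only [List.nil_append, osp_nil_right, osp_nil_left] at h1 ⊢
      rw [List.cons_append, osp_cons, h1, osp_cons]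
      simp only [osp_nil_right, osp_nil_left, Multiset.map_add, Multiset.map_map,
        Function.comp, Multiset.map_singleton, List.cons_append, List.nil_append]
      abel
    | cons b' B' ihB =>
      intro a b
      have h1 := ihA (b' :: B') a b
      have h2 := ihB a b
      have h3 := ihA B' a b
      simp only [List.cons_append] at h1 h2 h3 ⊢
      rw [osp_cons a' b', osp_cons a' b', osp_cons a' b', osp_cons a' b', h1, h2, h3]
      simp only [Multiset.map_add, Multiset.map_map, Function.comp, List.cons_append]
      abel

/-! ### A list version of `coars` -/

/-- The list of coarsenings (mirrors the definition of `coars`). -/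
def coarsL : List ℕ → List (List ℕ)
  | [] => [[]]
  | [i] => [[i]]
  | i :: j :: rest =>
      ((coarsL (j :: rest)).map (i :: ·)) ++
      ((coarsL (j :: rest)).map (fun I' => (i + I'.headD 0) :: I'.tail))

theorem coarsL_ne_nil {X : List ℕ} (hX : X ≠ []) :
    ∀ J ∈ coarsL X, J ≠ [] := by
  induction X with
  | nil => simp at hX
  | cons i X ih =>
    cases X with
    | nil => simp [coarsL]
    | cons j rest =>
      intro J hJ
      simp only [coarsL, List.mem_append, List.mem_map] at hJ
      rcases hJ with ⟨K, _, rfl⟩ | ⟨K, _, rfl⟩ <;> simp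

theorem coarsL_pos {X : List ℕ} (hpos : ∀ i ∈ X, 0 < i) :
    ∀ J ∈ coarsL X, ∀ j ∈ J, 0 < j := by
  induction X with
  | nil => simp [coarsL]
  | cons i X ih =>
    cases X with
    | nil =>
      intro J hJ x hx
      simp only [coarsL, List.mem_singleton] at hJ
      subst hJ
      simp only [List.mem_singleton] at hx
      subst hx
      exact hpos _ (by simp)
    | cons j' rest =>
      intro J hJ
      have hpos' : ∀ x ∈ j' :: rest, 0 < x := fun x hx => hpos x (by simp [hx])
      have hi : 0 < i := hpos i (by simp)
      simp only [coarsL, List.mem_append, List.mem_map] at hJ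
      rcases hJ with ⟨K, hK, rfl⟩ | ⟨K, hK, rfl⟩
      · intro x hx
        rcases List.mem_cons.1 hx with rfl | hx
        · exact hi
        · exact ih hpos' K hK x hx
      · intro x hx
        rcases List.mem_cons.1 hx with rfl | hx
        · omega
        · exact ih hpos' K hK x (List.mem_of_mem_tail hx)

theorem coarsL_nodup {X : List ℕ} (hpos : ∀ i ∈ X, 0 < i) : (coarsL X).Nodup := by
  induction X with
  | nil => simp [coarsL]
  | cons i X ih =>
    cases X with
    | nil => simp [coarsL]
    | cons j' rest =>
      have hpos' : ∀ x ∈ j' :: rest, 0 < x := fun x hx => hpos x (by simp [hx])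
      have hnd := ih hpos'
      have hne := coarsL_ne_nil (by simp : (j' :: rest : List ℕ) ≠ [])
      simp only [coarsL]
      refine List.Nodup.append ?_ ?_ ?_
      · exact hnd.map (fun K L h => by simpa using h)
      · refine hnd.map_on ?_
        intro K hK L hL h
        have hKne := hne K hK
        have hLne := hne L hL
        cases K with
        | nil => exact absurd rfl hKne
        | cons kh kt =>
          cases L with
          | nil => exact absurd rfl hLne
          | cons lh lt =>
            simp only [List.headD_cons, List.tail_cons, List.cons.injEq] at h
            obtain ⟨h1, h2⟩ := h
            have : kh = lh := by omega
            simp [this, h2]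
      · intro J hJ1 hJ2
        simp only [List.mem_map] at hJ1 hJ2
        obtain ⟨K, hK, rfl⟩ := hJ1
        obtain ⟨L, hL, h⟩ := hJ2
        have : 0 < L.headD 0 := by
          have hp := coarsL_pos hpos' L hL
          have hLne := hne L hL
          cases L with
          | nil => exact absurd rfl hLne
          | cons x t => simpa using hp x (by simp)
        simp only [List.cons.injEq] at h
        omega

theorem coars_eq_toFinset (X : List ℕ) : coars X = (coarsL X).toFinset := by
  induction X with
  | nil => simp [coars, coarsL]
  | cons i X ih =>
    cases X with
    | nil => simp [coars, coarsL]
    | cons j rest =>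
      simp only [coars, coarsL, ih, List.toFinset_append]
      ext J
      simp

theorem coarsL_cons {X : List ℕ} (hX : X ≠ []) (d : ℕ) :
    coarsL (d :: X) =
      ((coarsL X).map (d :: ·)) ++
      ((coarsL X).map (fun K => (d + K.headD 0) :: K.tail)) := by
  cases X with
  | nil => simp at hX
  | cons j rest => rfl

theorem coarsL_snoc_sum {M : Type*} [AddCommMonoid M] (f : List ℕ → M) (a : ℕ) :
    ∀ (D : List ℕ), D ≠ [] →
    ((coarsL (D ++ [a])).map f).sum =
      ((coarsL D).map fun K => f (K ++ [a])).sum +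
      ((coarsL D).map fun K => f (K.dropLast ++ [K.getLastD 0 + a])).sum := by
  intro D
  induction D generalizing f with
  | nil => intro h; simp at h
  | cons d D' ih =>
    intro _
    cases D' with
    | nil =>
      simp [coarsL]
    | cons j rest =>
      have hD' : (j :: rest : List ℕ) ≠ [] := by simp
      have hne := coarsL_ne_nil hD'
      rw [List.cons_append, coarsL_cons (show (j :: rest) ++ [a] ≠ [] by simp) d,
        coarsL_cons hD']
      simp only [List.map_append, List.sum_append, List.map_map]
      rw [ih (f ∘ (fun x => d :: x)) hD', ih (f ∘ fun K => (d + K.headD 0) :: K.tail) hD']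
      have r1 : List.map ((fun K => f (K ++ [a])) ∘ fun x => d :: x) (coarsL (j :: rest))
          = List.map (fun K => f (d :: (K ++ [a]))) (coarsL (j :: rest)) := by
        simp [Function.comp_def]
      have r2 : List.map ((fun K => f (K ++ [a])) ∘ fun K => (d + K.headD 0) :: K.tail) (coarsL (j :: rest))
          = List.map (fun K => f ((d + (K ++ [a]).headD 0) :: (K ++ [a]).tail)) (coarsL (j :: rest)) := by
        apply List.map_congr_left
        intro K hK
        cases K with
        | nil => exact absurd rfl (hne _ hK)
        | cons k t => simp [Function.comp_def]
      have r3 : List.map ((fun K => f (K.dropLast ++ [K.getLastD 0 + a])) ∘ fun x => d :: x) (coarsL (j :: rest))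
          = List.map (fun K => f (d :: (K.dropLast ++ [K.getLastD 0 + a]))) (coarsL (j :: rest)) := by
        apply List.map_congr_left
        intro K hK
        cases K with
        | nil => exact absurd rfl (hne _ hK)
        | cons k t =>
          simp only [Function.comp_def]
          cases t with
          | nil => simp
          | cons t1 t2 => simp [List.getLastD_cons, List.dropLast_cons₂]
      have r4 : List.map ((fun K => f (K.dropLast ++ [K.getLastD 0 + a])) ∘ fun K => (d + K.headD 0) :: K.tail) (coarsL (j :: rest))
          = List.map (fun K => f ((d + (K.dropLast ++ [K.getLastD 0 + a]).headD 0) :: (K.dropLast ++ [K.getLastD 0 + a]).tail)) (coarsL (j :: rest)) := by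
        apply List.map_congr_left
        intro K hK
        cases K with
        | nil => exact absurd rfl (hne _ hK)
        | cons k t =>
          simp only [Function.comp_def]
          cases t with
          | nil => simp [Nat.add_assoc]
          | cons t1 t2 => simp [List.getLastD_cons, List.dropLast_cons₂]
      rw [r1, r2, r3, r4]
      simp only [Function.comp_def]
      abel

/-! ### Auxiliary lemmas about `F2D` -/

theorem F2D.add_self (x : F2D) : x + x = 0 := by
  ext a
  simp only [Finsupp.add_apply, Finsupp.coe_zero, Pi.zero_apply]
  exact CharTwo.add_self_eq_zero _

theorem ofMS_add (m n : Multiset (List ℕ)) : ofMS (m + n) = ofMS m + ofMS n := by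
  simp [ofMS]

theorem ofMS_singleton (A : List ℕ) : ofMS {A} = sElem A := by simp [ofMS]

theorem fmul_single_left (A : List ℕ) (y : F2D) :
    fmul (sElem A) y = y.sum fun J b => b • ofMS (osp A J) := by
  unfold fmul sElem
  rw [Finsupp.sum_single_index]
  · simp
  · simp

theorem fmul_single_listsum (A : List ℕ) (L : List (List ℕ)) :
    fmul (sElem A) ((L.map sElem).sum) = (L.map fun J => ofMS (osp A J)).sum := by
  induction L with
  | nil => simp [fmul_single_left]
  | cons J L ih =>
    simp only [List.map_cons, List.sum_cons]
    rw [fmul_single_left, Finsupp.sum_add_index']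
    · rw [← fmul_single_left, ← fmul_single_left, ih]
      congr 1
      rw [fmul_single_left]
      unfold sElem
      rw [Finsupp.sum_single_index] <;> simp
    · intro; simp
    · intro J b1 b2; rw [add_smul]

theorem sum_map_add {M : Type*} [AddCommMonoid M] (L : List (List ℕ))
    (f g : List ℕ → M) :
    (L.map fun x => f x + g x).sum = (L.map f).sum + (L.map g).sum := by
  induction L with
  | nil => simp
  | cons x L ih => simp [ih]; abel

/-! ### Various list helpers -/

theorem take_snoc (I : List ℕ) (k : ℕ) (h : k < I.length) :
    I.take (k + 1) = I.take k ++ [I.getD k 0] := by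
  rw [List.take_succ]
  congr 1
  rw [List.getD_eq_getElem?_getD]
  simp [List.getElem?_eq_getElem h]

theorem drop_rev_snoc (I : List ℕ) (k : ℕ) (h : k < I.length) :
    (I.drop k).reverse = (I.drop (k + 1)).reverse ++ [I.getD k 0] := by
  rw [List.drop_eq_getElem_cons h, List.reverse_cons]
  congr 2
  rw [List.getD_eq_getElem?_getD]
  simp [List.getElem?_eq_getElem h]

theorem dropLast_getLastD {J : List ℕ} (h : J ≠ []) :
    J.dropLast ++ [J.getLastD 0] = J := by
  have : J.getLastD 0 = J.getLast h := by
    rw [List.getLastD_eq_getLast?, List.getLast?_eq_getLast h]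
    rfl
  rw [this, List.dropLast_append_getLast]

/-! ### The three families of partial sums -/

/-- The summand at level `k`. -/
noncomputable def Qf (I : List ℕ) (k : ℕ) : F2D :=
  ((coarsL ((I.drop k).reverse)).map fun J => ofMS (osp (I.take k) J)).sum

/-- Part of `Qf` where the last cell of the shuffle is the last block alone. -/
noncomputable def Ef (I : List ℕ) (k : ℕ) : F2D :=
  ((coarsL ((I.drop k).reverse)).map fun J =>
    ofMS ((osp (I.take k) J.dropLast).map (· ++ [J.getLastD 0]))).sum

/-- Part of `Qf` where the last cell contains the last letter of the left factor. -/
noncomputable def XZf (I : List ℕ) (k : ℕ) : F2D :=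
  ((coarsL ((I.drop k).reverse)).map fun J =>
    ofMS ((osp (I.take (k-1)) J).map (· ++ [I.getD (k-1) 0])) +
    ofMS ((osp (I.take (k-1)) J.dropLast).map (· ++ [J.getLastD 0 + I.getD (k-1) 0]))).sum

theorem conv_lemma (I : List ℕ) (hpos : ∀ i ∈ I, 0 < i) (k : ℕ) :
    fmul (sElem (I.take k)) (chiS (I.drop k)) = Qf I k := by
  have hpos' : ∀ i ∈ (I.drop k).reverse, 0 < i := by
    intro i hi
    exact hpos i (List.mem_of_mem_drop (List.mem_reverse.1 hi))
  rw [chiS, coars_eq_toFinset, List.sum_toFinset _ (coarsL_nodup hpos'),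
    fmul_single_listsum, Qf]

theorem decomp_lemma (I : List ℕ) (k : ℕ) (hk1 : 1 ≤ k) (hk2 : k < I.length) :
    Qf I k = Ef I k + XZf I k := by
  rw [Qf, Ef, XZf, ← sum_map_add]
  apply congrArg
  apply List.map_congr_left
  intro J hJ
  have hdk : I.drop k ≠ [] := by
    intro h
    have : (I.drop k).length = I.length - k := List.length_drop
    rw [h] at this
    simp at this
    omega
  have hJne : J ≠ [] := coarsL_ne_nil (by simpa using hdk) J hJ
  obtain ⟨k', rfl⟩ : ∃ k', k = k' + 1 := ⟨k - 1, by omega⟩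
  have htake : I.take (k' + 1) = I.take k' ++ [I.getD k' 0] := take_snoc I k' (by omega)
  have hJeq : J = J.dropLast ++ [J.getLastD 0] := (dropLast_getLastD hJne).symm
  calc ofMS (osp (I.take (k' + 1)) J)
      = ofMS (osp (I.take k' ++ [I.getD k' 0]) (J.dropLast ++ [J.getLastD 0])) := by
        rw [← htake, ← hJeq]
    _ = _ := by
        rw [osp_snoc, ofMS_add, ofMS_add]
        rw [← hJeq]
        simp only [Nat.add_sub_cancel]
        rw [htake]
        abel

theorem cross_lemma (I : List ℕ) (k : ℕ) (hk : k + 1 < I.length) :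
    Ef I k = XZf I (k + 1) := by
  have hD : (I.drop (k+1)).reverse ≠ [] := by
    have h1 : I.drop (k+1) ≠ [] := by
      intro h
      have : (I.drop (k+1)).length = I.length - (k+1) := List.length_drop
      rw [h] at this
      simp at this
      omega
    simpa using h1
  rw [Ef, drop_rev_snoc I k (by omega),
    coarsL_snoc_sum _ _ _ hD, XZf, sum_map_add]
  simp only [Nat.add_sub_cancel]
  congr 1
  · apply congrArg
    apply List.map_congr_left
    intro K hK
    simp
  · apply congrArg
    apply List.map_congr_left
    intro K hK
    simp

theorem q_zero (I : List ℕ) (hI : I ≠ []) : Qf I 0 = Ef I 0 := by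
  rw [Qf, Ef]
  apply congrArg
  apply List.map_congr_left
  intro J hJ
  have hJne : J ≠ [] := coarsL_ne_nil (by simpa using hI) J hJ
  rw [List.take_zero, osp_nil_left, osp_nil_left]
  rw [Multiset.map_singleton, ofMS_singleton, ofMS_singleton, dropLast_getLastD hJne]

theorem q_top (I : List ℕ) : Qf I I.length = sElem I := by
  rw [Qf]
  simp [coarsL, osp_nil_right, ofMS_singleton]

theorem e_top (I : List ℕ) (hI : I ≠ []) : Ef I (I.length - 1) = sElem I := by
  have hlen : 0 < I.length := List.length_pos_of_ne_nil hI
  have hdrop : I.drop (I.length - 1) = [I.getD (I.length - 1) 0] := by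
    have h1 := List.drop_eq_getElem_cons (l := I) (show I.length - 1 < I.length by omega)
    rw [show I.length - 1 + 1 = I.length by omega, List.drop_length] at h1
    rw [h1]
    congr 1
    rw [List.getD_eq_getElem?_getD]
    simp [List.getElem?_eq_getElem (show I.length - 1 < I.length by omega)]
  rw [Ef, hdrop]
  simp only [List.reverse_singleton]
  rw [show coarsL [I.getD (I.length - 1) 0] = [[I.getD (I.length - 1) 0]] from rfl]
  simp only [List.map_singleton, List.sum_singleton]
  rw [show ([I.getD (I.length - 1) 0] : List ℕ).dropLast = [] from rfl,
    show ([I.getD (I.length - 1) 0] : List ℕ).getLastD 0 = I.getD (I.length - 1) 0 from rfl,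
    osp_nil_right, Multiset.map_singleton, ofMS_singleton]
  rw [← take_snoc I (I.length - 1) (by omega), show I.length - 1 + 1 = I.length by omega,
    List.take_length]

/-- `χ'(S_I) := Σ_{I' ∈ C(I⁻¹)} S_{I'}` satisfies the defining equation of the
conjugation (antipode) of the mod 2 dual Leibniz--Hopf algebra: for every
nonempty sequence `I = (i_1,…,i_n)` of positive integers,
`Σ_{k=0}^{n} S_{(i_1,…,i_k)} · χ'(S_{(i_{k+1},…,i_n)}) = 0` in `𝓕₂*`. -/
theorem chiS_antipode (I : List ℕ) (hI : I ≠ []) (hpos : ∀ i ∈ I, 0 < i) :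
    ∑ k ∈ Finset.range (I.length + 1),
      fmul (sElem (I.take k)) (chiS (I.drop k)) = 0 := by
  obtain ⟨m, hm⟩ : ∃ m, I.length = m + 1 :=
    ⟨I.length - 1, by have := List.length_pos_of_ne_nil hI; omega⟩
  have hconv : ∀ k, fmul (sElem (I.take k)) (chiS (I.drop k)) = Qf I k :=
    conv_lemma I hpos
  calc ∑ k ∈ Finset.range (I.length + 1), fmul (sElem (I.take k)) (chiS (I.drop k))
      = ∑ k ∈ Finset.range (I.length + 1), Qf I k := by
        exact Finset.sum_congr rfl fun k _ => hconv k
    _ = (∑ k ∈ Finset.range I.length, Qf I (k + 1)) + Qf I 0 := by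
        rw [Finset.sum_range_succ']
    _ = (∑ k ∈ Finset.range m, Qf I (k + 1)) + Qf I (m + 1) + Qf I 0 := by
        rw [hm, Finset.sum_range_succ]
    _ = (∑ k ∈ Finset.range m, (Ef I (k + 1) + XZf I (k + 1))) + sElem I + Ef I 0 := by
        rw [← hm, q_top, q_zero I hI]
        congr 1
        congr 1
        apply Finset.sum_congr rfl
        intro k hk
        rw [Finset.mem_range] at hk
        exact decomp_lemma I (k + 1) (by omega) (by omega)
    _ = ((∑ k ∈ Finset.range m, Ef I (k + 1)) + Ef I 0) +
        (∑ k ∈ Finset.range m, XZf I (k + 1)) + sElem I := by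
        rw [Finset.sum_add_distrib]; abel
    _ = (∑ k ∈ Finset.range (m + 1), Ef I k) +
        (∑ k ∈ Finset.range m, XZf I (k + 1)) + sElem I := by
        rw [Finset.sum_range_succ']
    _ = ((∑ k ∈ Finset.range m, Ef I k) + Ef I m) +
        (∑ k ∈ Finset.range m, XZf I (k + 1)) + sElem I := by
        rw [Finset.sum_range_succ]
    _ = ((∑ k ∈ Finset.range m, XZf I (k + 1)) + sElem I) +
        (∑ k ∈ Finset.range m, XZf I (k + 1)) + sElem I := by
        congr 2
        · congr 1
          · apply Finset.sum_congr rfl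
            intro k hk
            rw [Finset.mem_range] at hk
            exact cross_lemma I k (by omega)
          · have : m = I.length - 1 := by omega
            rw [this, e_top I hI]
    _ = 0 := by
        have h1 := F2D.add_self ((∑ k ∈ Finset.range m, XZf I (k + 1)) + sElem I)
        calc ((∑ k ∈ Finset.range m, XZf I (k + 1)) + sElem I) +
            (∑ k ∈ Finset.range m, XZf I (k + 1)) + sElem I
            = ((∑ k ∈ Finset.range m, XZf I (k + 1)) + sElem I) +
              ((∑ k ∈ Finset.range m, XZf I (k + 1)) + sElem I) := by abel
          _ = 0 := h1
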